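/- Let C be a contraction on a Banach space X satisfying the Ritt-type bound ‖C^n (1 - C)‖ ≤ K/(n+1) for all n ∈ ℕ. Then for every n ≥ 1 and every δ with 0 < δ < 1/2 (and n large enough so that n^{δ+1/2} ≤ n/2), one has the operator-norm bound ‖C^n - exp(n(C - 1))‖ ≤ 2 n^{-2δ} + 2K n^{-(1/2 - δ)}. -/

import Mathlib

open NormedSpace

set_option synthInstance.maxHeartbeats 1000000 in
private lemma rce_exp_expand {X : Type*} [NormedAddCommGroup X] [NormedSpace ℝ X]
    [CompleteSpace X] (C : X →L[ℝ] X) (x : ℝ) :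
    HasSum (fun k : ℕ => (Real.exp (-x) * (x ^ k / k.factorial)) • C ^ k)
      (exp (x • (C - 1))) := by
  have hsplit : x • (C - 1) = x • C + (-x) • (1 : X →L[ℝ] X) := by
    rw [smul_sub, neg_smul, sub_eq_add_neg]
  have hcomm : Commute (x • C) ((-x) • (1 : X →L[ℝ] X)) :=
    (Commute.one_right (x • C)).smul_right (-x)
  have h1 : exp ((-x) • (1 : X →L[ℝ] X)) = Real.exp (-x) • 1 := by
    rw [← Algebra.algebraMap_eq_smul_one, ← algebraMap_exp_comm,
      Algebra.algebraMap_eq_smul_one, Real.exp_eq_exp_ℝ]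
  have h2 : exp (x • (C - 1)) = Real.exp (-x) • exp (x • C) := by
    rw [hsplit, exp_add_of_commute_of_mem_ball (𝕂 := ℝ) hcomm
      ((expSeries_radius_eq_top ℝ (X →L[ℝ] X)).symm ▸ edist_lt_top _ _)
      ((expSeries_radius_eq_top ℝ (X →L[ℝ] X)).symm ▸ edist_lt_top _ _), h1, mul_smul_comm, mul_one]
  rw [h2]
  have h3 : HasSum (fun k : ℕ => ((k.factorial : ℝ)⁻¹) • (x • C) ^ k) (exp (x • C)) :=
    exp_series_hasSum_exp' (x • C)
  have h4 := h3.const_smul (Real.exp (-x))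
  convert h4 using 2 with k
  rw [smul_pow, smul_smul, smul_smul]
  congr 1
  rw [div_eq_mul_inv]
  ring

private lemma rce_poisson_q (x : ℝ) :
    HasSum (fun k : ℕ => x ^ k / k.factorial) (Real.exp x) := by
  rw [Real.exp_eq_exp_ℝ]
  exact expSeries_div_hasSum_exp x

private lemma rce_poisson_mean (x : ℝ) :
    HasSum (fun k : ℕ => (k : ℝ) * (x ^ k / k.factorial)) (x * Real.exp x) := by
  have key : (fun k : ℕ => ((k + 1 : ℕ) : ℝ) * (x ^ (k+1) / (k+1).factorial))
      = fun k : ℕ => x * (x ^ k / k.factorial) := by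
    funext k
    have hf : ((k+1).factorial : ℝ) = (k+1) * k.factorial := by
      rw [Nat.factorial_succ]; push_cast; ring
    have h0 : (k.factorial : ℝ) ≠ 0 := Nat.cast_ne_zero.mpr k.factorial_ne_zero
    have h1 : ((k:ℝ) + 1) ≠ 0 := by positivity
    rw [hf]; push_cast; field_simp; ring
  have h : HasSum (fun k : ℕ => ((k + 1 : ℕ) : ℝ) * (x ^ (k+1) / (k+1).factorial))
      (x * Real.exp x) := key ▸ (rce_poisson_q x).mul_left x
  have := (hasSum_nat_add_iff (f := fun k : ℕ => (k : ℝ) * (x ^ k / k.factorial)) 1).mp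
    (by simpa using h)
  simpa using this

private lemma rce_poisson_sq (x : ℝ) :
    HasSum (fun k : ℕ => ((k : ℝ))^2 * (x ^ k / k.factorial)) (x * (x + 1) * Real.exp x) := by
  have key : (fun k : ℕ => (((k + 1 : ℕ) : ℝ))^2 * (x ^ (k+1) / (k+1).factorial))
      = fun k : ℕ => x * ((k : ℝ) * (x ^ k / k.factorial)) + x * (x ^ k / k.factorial) := by
    funext k
    have hf : ((k+1).factorial : ℝ) = (k+1) * k.factorial := by
      rw [Nat.factorial_succ]; push_cast; ring
    have h0 : (k.factorial : ℝ) ≠ 0 := Nat.cast_ne_zero.mpr k.factorial_ne_zero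
    have h1 : ((k:ℝ) + 1) ≠ 0 := by positivity
    rw [hf]; push_cast; field_simp; ring
  have h : HasSum (fun k : ℕ => (((k + 1 : ℕ) : ℝ))^2 * (x ^ (k+1) / (k+1).factorial))
      (x * (x * Real.exp x) + x * Real.exp x) :=
    key ▸ ((rce_poisson_mean x).mul_left x).add ((rce_poisson_q x).mul_left x)
  have h1 := (hasSum_nat_add_iff (f := fun k : ℕ => ((k : ℝ))^2 * (x ^ k / k.factorial)) 1).mp
    (by simpa using h)
  have h2 := by simpa using h1
  convert h2 using 1
  · rfl
  ring

private lemma rce_poisson_var (x : ℝ) :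
    HasSum (fun k : ℕ => (x ^ k / k.factorial) * ((k : ℝ) - x)^2) (x * Real.exp x) := by
  have h := ((rce_poisson_sq x).sub ((rce_poisson_mean x).mul_left (2*x))).add
    ((rce_poisson_q x).mul_left (x^2))
  convert h using 1
  · rfl
  · funext k; ring
  · ring

private lemma rce_pow_norm_le {X : Type*} [NormedAddCommGroup X] [NormedSpace ℝ X]
    (C : X →L[ℝ] X) (hC : ‖C‖ ≤ 1) : ∀ k : ℕ, ‖C ^ k‖ ≤ 1 := by
  intro k
  induction k with
  | zero => rw [pow_zero]; exact ContinuousLinearMap.norm_id_le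
  | succ k ih =>
    calc ‖C ^ (k+1)‖ = ‖C ^ k * C‖ := by rw [pow_succ]
    _ ≤ ‖C ^ k‖ * ‖C‖ := norm_mul_le _ _
    _ ≤ 1 * 1 := mul_le_mul ih hC (norm_nonneg _) zero_le_one
    _ = 1 := one_mul 1

private lemma rce_telescope {X : Type*} [NormedAddCommGroup X] [NormedSpace ℝ X]
    (C : X →L[ℝ] X) (K : ℝ) (hK : 0 < K)
    (hRitt : ∀ n : ℕ, ‖C ^ n * (1 - C)‖ ≤ K / (n + 1))
    (m M : ℕ) (h : m ≤ M) : ‖C ^ M - C ^ m‖ ≤ (M - m : ℕ) * (K / (m + 1)) := by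
  have key : C ^ m - C ^ M = ∑ j ∈ Finset.Ico m M, C ^ j * (1 - C) := by
    have hmul : ∀ j, C ^ j * (1 - C) = C ^ j - C ^ (j+1) := by
      intro j; rw [mul_sub, mul_one, pow_succ]
    simp_rw [hmul]
    have hr : ∀ N : ℕ, ∑ j ∈ Finset.range N, (C ^ j - C ^ (j+1)) = 1 - C ^ N := by
      intro N
      have h2 := Finset.sum_range_sub (fun j => C ^ j) N
      have h3 : ∑ j ∈ Finset.range N, (C ^ j - C ^ (j+1))
          = -∑ j ∈ Finset.range N, (C ^ (j+1) - C ^ j) := by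
        rw [← Finset.sum_neg_distrib]; simp [neg_sub]
      rw [h3, h2]; simp
    rw [Finset.sum_Ico_eq_sub _ h, hr, hr]
    abel
  rw [norm_sub_rev, key]
  calc ‖∑ j ∈ Finset.Ico m M, C ^ j * (1 - C)‖ ≤ ∑ j ∈ Finset.Ico m M, ‖C ^ j * (1 - C)‖ :=
        norm_sum_le _ _
  _ ≤ ∑ j ∈ Finset.Ico m M, K / (m + 1) := by
      refine Finset.sum_le_sum fun j hj => (hRitt j).trans ?_
      have hjm : m ≤ j := (Finset.mem_Ico.mp hj).1
      apply div_le_div_of_nonneg_left hK.le (by positivity)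
      exact_mod_cast by exact_mod_cast add_le_add_left (Nat.cast_le.mpr hjm) 1
  _ = (M - m : ℕ) * (K / (m + 1)) := by rw [Finset.sum_const, Nat.card_Ico, nsmul_eq_mul]

theorem ritt_chernoff_norm_estimate {X : Type*} [NormedAddCommGroup X] [NormedSpace ℝ X]
    [CompleteSpace X] (C : X →L[ℝ] X) (hC : ‖C‖ ≤ 1) (K : ℝ) (hK : 0 < K)
    (hRitt : ∀ n : ℕ, ‖C ^ n * (1 - C)‖ ≤ K / (n + 1))
    (n : ℕ) (hn : 1 ≤ n) (δ : ℝ) (hδ0 : 0 < δ) (hδ : δ < 1 / 2)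
    (hlarge : (n : ℝ) ^ (δ + 1 / 2) ≤ n / 2) :
    ‖C ^ n - exp ((n : ℝ) • (C - 1))‖ ≤
      2 * (n : ℝ) ^ (-(2 * δ)) + 2 * K * (n : ℝ) ^ (-(1 / 2 - δ)) := by
  set x : ℝ := (n : ℝ) with hxdef
  have hx1 : (1:ℝ) ≤ x := by rw [hxdef]; exact_mod_cast hn
  have hx : (0:ℝ) < x := lt_of_lt_of_le zero_lt_one hx1
  set b : ℝ := x ^ (δ + 1/2) with hbdef
  have hb0 : (0:ℝ) < b := Real.rpow_pos_of_pos hx _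
  have hbn : b ≤ x / 2 := hlarge
  set p : ℕ → ℝ := fun k => Real.exp (-x) * (x ^ k / k.factorial) with hpdef
  have hp0 : ∀ k, 0 ≤ p k := by
    intro k
    have : (0:ℝ) ≤ x ^ k / k.factorial := by positivity
    exact mul_nonneg (Real.exp_pos _).le this
  have hp : HasSum p 1 := by
    have h := (rce_poisson_q x).mul_left (Real.exp (-x))
    convert h using 1
    · rfl
    rw [← Real.exp_add]; simp
  have hpvar : HasSum (fun k : ℕ => p k * ((k:ℝ) - x)^2) x := by
    have h := (rce_poisson_var x).mul_left (Real.exp (-x))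
    convert h using 1
    · rfl
    · funext k; simp only [hpdef]; ring
    · rw [show Real.exp (-x) * (x * Real.exp x) = x * (Real.exp (-x) * Real.exp x) by ring,
        ← Real.exp_add]; simp
  -- series representation of the difference
  have hS1 : HasSum (fun k : ℕ => p k • C ^ k) (exp (x • (C - 1))) := rce_exp_expand C x
  have hS2 : HasSum (fun k : ℕ => p k • C ^ n) (C ^ n) := by
    simpa using hp.smul_const (C ^ n)
  have hS3 : HasSum (fun k : ℕ => p k • (C ^ n - C ^ k)) (C ^ n - exp (x • (C - 1))) := by
    have := hS2.sub hS1
    simpa [smul_sub] using this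
  -- pointwise bound
  have hDle : ∀ k : ℕ, ‖C ^ n - C ^ k‖ ≤ 2 := by
    intro k
    calc ‖C ^ n - C ^ k‖ ≤ ‖C ^ n‖ + ‖C ^ k‖ := norm_sub_le _ _
    _ ≤ 1 + 1 := add_le_add (rce_pow_norm_le C hC n) (rce_pow_norm_le C hC k)
    _ = 2 := by norm_num
  set g : ℕ → ℝ := fun k => 2*K*b/x + 2/b^2 * (((k:ℝ) - x)^2) with hgdef
  have hpt : ∀ k : ℕ, ‖C ^ n - C ^ k‖ ≤ g k := by
    intro k
    by_cases hnear : |(k:ℝ) - x| ≤ b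
    · have hterm2 : (0:ℝ) ≤ 2/b^2 * (((k:ℝ) - x)^2) := by positivity
      have hmain : ‖C ^ n - C ^ k‖ ≤ 2*K*b/x := by
        rcases le_total k n with hkn | hnk
        · have ht := rce_telescope C K hK hRitt k n hkn
          have hc : ((n - k : ℕ) : ℝ) = x - k := by
            rw [Nat.cast_sub hkn]
          have h1 : x - (k:ℝ) ≤ b := by
            rw [abs_sub_comm] at hnear
            exact (le_abs_self _).trans hnear
          have h2 : x/2 ≤ (k:ℝ) + 1 := by linarith
          have h3 : ((n - k : ℕ) : ℝ) ≤ b := by rw [hc]; exact h1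
          calc ‖C ^ n - C ^ k‖ ≤ ((n - k : ℕ) : ℝ) * (K / ((k:ℝ) + 1)) := ht
          _ ≤ b * (K / (x/2)) := by
              apply mul_le_mul h3 _ (by positivity) hb0.le
              exact div_le_div_of_nonneg_left hK.le (by linarith) h2
          _ = 2*K*b/x := by field_simp
        · have ht := rce_telescope C K hK hRitt n k hnk
          have hc : ((k - n : ℕ) : ℝ) = (k:ℝ) - x := by
            rw [Nat.cast_sub hnk]
          have h1 : (k:ℝ) - x ≤ b := (le_abs_self _).trans hnear
          have h2 : x/2 ≤ x + 1 := by linarith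
          have h3 : ((k - n : ℕ) : ℝ) ≤ b := by rw [hc]; exact h1
          calc ‖C ^ n - C ^ k‖ = ‖C ^ k - C ^ n‖ := norm_sub_rev _ _
          _ ≤ ((k - n : ℕ) : ℝ) * (K / (x + 1)) := ht
          _ ≤ b * (K / (x/2)) := by
              apply mul_le_mul h3 _ (by positivity) hb0.le
              exact div_le_div_of_nonneg_left hK.le (by linarith) h2
          _ = 2*K*b/x := by field_simp
      calc ‖C ^ n - C ^ k‖ ≤ 2*K*b/x := hmain
      _ ≤ g k := le_add_of_nonneg_right hterm2
    · push_neg at hnear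
      have h1 : b^2 ≤ ((k:ℝ) - x)^2 := by
        have := sq_abs ((k:ℝ) - x)
        nlinarith [hnear, hb0]
      have h2 : (2:ℝ) ≤ 2/b^2 * (((k:ℝ) - x)^2) := by
        rw [div_mul_eq_mul_div, le_div_iff₀ (by positivity)]
        nlinarith
      have hterm1 : (0:ℝ) ≤ 2*K*b/x := by positivity
      calc ‖C ^ n - C ^ k‖ ≤ 2 := hDle k
      _ ≤ 2/b^2 * (((k:ℝ) - x)^2) := h2
      _ ≤ g k := le_add_of_nonneg_left hterm1
  -- majorant series
  have hmaj : HasSum (fun k : ℕ => p k * g k) (2*K*b/x + 2/b^2 * x) := by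
    have h := (hp.mul_left (2*K*b/x)).add (hpvar.mul_left (2/b^2))
    convert h using 1
    · rfl
    · funext k; simp only [hgdef]; ring
    · ring
  have hnormle : ∀ k : ℕ, ‖p k • (C ^ n - C ^ k)‖ ≤ p k * g k := by
    intro k
    have : ‖p k • (C ^ n - C ^ k)‖ = p k * ‖C ^ n - C ^ k‖ := by
      rw [norm_smul (p k) (C ^ n - C ^ k), Real.norm_eq_abs, abs_of_nonneg (hp0 k)]
    rw [this]
    exact mul_le_mul_of_nonneg_left (hpt k) (hp0 k)
  have hsumnorm : Summable (fun k : ℕ => ‖p k • (C ^ n - C ^ k)‖) :=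
    Summable.of_nonneg_of_le (fun k => norm_nonneg _) hnormle hmaj.summable
  have hbound : ‖C ^ n - exp (x • (C - 1))‖ ≤ 2*K*b/x + 2/b^2 * x := by
    rw [← hS3.tsum_eq]
    calc ‖∑' k : ℕ, p k • (C ^ n - C ^ k)‖ ≤ ∑' k : ℕ, ‖p k • (C ^ n - C ^ k)‖ :=
          norm_tsum_le_tsum_norm hsumnorm
    _ ≤ ∑' k : ℕ, p k * g k := Summable.tsum_le_tsum hnormle hsumnorm hmaj.summable
    _ = 2*K*b/x + 2/b^2 * x := hmaj.tsum_eq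
  -- convert to rpow form
  have e1 : b / x = x ^ (-(1/2 - δ)) := by
    calc b / x = x ^ (δ + 1/2) / x ^ (1:ℝ) := by rw [Real.rpow_one, hbdef]
    _ = x ^ (δ + 1/2 - 1) := by rw [← Real.rpow_sub hx]
    _ = x ^ (-(1/2 - δ)) := by congr 1; ring
  have hb2 : b^2 = x ^ (2*δ + 1) := by
    rw [hbdef, sq, ← Real.rpow_add hx]; congr 1; ring
  have e2 : x / b^2 = x ^ (-(2*δ)) := by
    calc x / b^2 = x ^ (1:ℝ) / x ^ (2*δ + 1) := by rw [Real.rpow_one, hb2]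
    _ = x ^ (1 - (2*δ + 1)) := by rw [← Real.rpow_sub hx]
    _ = x ^ (-(2*δ)) := by congr 1; ring
  have efin : 2*K*b/x + 2/b^2 * x = 2 * x ^ (-(2*δ)) + 2 * K * x ^ (-(1/2 - δ)) := by
    rw [← e1, ← e2]; field_simp; ring
  rw [efin] at hbound
  exact hbound
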